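/- Let X be an infinite-dimensional separable real Banach space. Then the following are equivalent: (Cat1) X is ω-categorical; (Cat2) for every finite-dimensional normed space E and every C ≥ 0, the set Emb_C(E,X) is totally bounded modulo Iso(X), i.e. for every ε > 0 there exists a finite set S ⊆ Emb_C(E,X) such that for every f ∈ Emb_C(E,X) there are g ∈ S and T ∈ Iso(X) with ‖f − T∘g‖ < ε; (Cat3) there exists C′ > 0 such that for every C ∈ (0, C′) and every finite-dimensional normed space E finitely representable in X, the set Emb_C(E,X) is totally bounded modulo Iso(X) in the same sense. -/

import Mathlib

noncomputable section

open Real Metric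

/-- A bundled finite-dimensional real normed space. -/
structure FinNormedSpace where
  carrier : Type
  [grp : NormedAddCommGroup carrier]
  [mod : NormedSpace ℝ carrier]
  [fd : FiniteDimensional ℝ carrier]

attribute [instance] FinNormedSpace.grp FinNormedSpace.mod FinNormedSpace.fd

instance : CoeSort FinNormedSpace Type := ⟨FinNormedSpace.carrier⟩

/-- `T ∈ Emb_C(E, F)`. -/
def IsEmbC {E F : Type*} [NormedAddCommGroup E] [NormedSpace ℝ E]
    [NormedAddCommGroup F] [NormedSpace ℝ F] (C : ℝ) (T : E →L[ℝ] F) : Prop :=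
  ∀ x : E, Real.exp (-C) * ‖x‖ ≤ ‖T x‖ ∧ ‖T x‖ ≤ Real.exp C * ‖x‖

/-- `T ∈ Emb(E, F)`, i.e. `T` is a linear isometric embedding. -/
def IsIsomEmb {E F : Type*} [NormedAddCommGroup E] [NormedSpace ℝ E]
    [NormedAddCommGroup F] [NormedSpace ℝ F] (T : E →L[ℝ] F) : Prop :=
  ∀ x : E, ‖T x‖ = ‖x‖

/-- The continuous linear map underlying a surjective linear isometry. -/
def toCLM {X Y : Type*} [NormedAddCommGroup X] [NormedSpace ℝ X]
    [NormedAddCommGroup Y] [NormedSpace ℝ Y] (T : X ≃ₗᵢ[ℝ] Y) : X →L[ℝ] Y :=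
  T.toLinearIsometry.toContinuousLinearMap

/-- `F` is finitely representable in `X`. -/
def FinRep (F : FinNormedSpace) (X : Type*) [NormedAddCommGroup X]
    [NormedSpace ℝ X] : Prop :=
  ∀ ε : ℝ, 0 < ε → ∃ T : F.carrier →L[ℝ] X, IsEmbC ε T

/-- The inclusion of a submodule into a larger one, as a continuous linear map. -/
def inclCLM {X : Type*} [NormedAddCommGroup X] [NormedSpace ℝ X]
    {E F : Submodule ℝ X} (h : E ≤ F) : E →L[ℝ] F :=
  (Submodule.subtypeL E).codRestrict F (fun x => h x.2)

/-- `X` is ω-categorical (ε-net formulation of compactness of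
`(B_X)^n ⫽ Iso(X)`). -/
def OmegaCategorical (X : Type*) [NormedAddCommGroup X] [NormedSpace ℝ X] : Prop :=
  ∀ n : ℕ, ∀ ε : ℝ, 0 < ε →
    ∃ S : Set (Fin n → X), S.Finite ∧ (∀ x ∈ S, ∀ i, ‖x i‖ ≤ 1) ∧
      ∀ y : Fin n → X, (∀ i, ‖y i‖ ≤ 1) →
        ∃ x ∈ S, ∃ T : X ≃ₗᵢ[ℝ] X, ∀ i, ‖y i - T (x i)‖ < ε

/-- `Emb_C(E, X)` is totally bounded modulo `Iso(X)`. -/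
def TotallyBoundedModIso (E : Type*) [NormedAddCommGroup E] [NormedSpace ℝ E]
    (X : Type*) [NormedAddCommGroup X] [NormedSpace ℝ X] (C : ℝ) : Prop :=
  ∀ ε : ℝ, 0 < ε →
    ∃ S : Set (E →L[ℝ] X), S.Finite ∧ (∀ g ∈ S, IsEmbC C g) ∧
      ∀ f : E →L[ℝ] X, IsEmbC C f →
        ∃ g ∈ S, ∃ T : X ≃ₗᵢ[ℝ] X, ‖f - (toCLM T).comp g‖ < ε


set_option linter.unusedSectionVars false
set_option maxHeartbeats 1000000

section T
variable {X : Type*} [NormedAddCommGroup X] [NormedSpace ℝ X]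

structure SpanCopy {n : ℕ} (v : Fin n → X) : Type where
  c : Fin n → ℝ

/-- a "good" family: norms of combinations dominate the ℓ¹ norm of coefficients. -/
class GoodFam {n : ℕ} (v : Fin n → X) : Prop where
  out : ∃ c : ℝ, 0 < c ∧ ∀ a : Fin n → ℝ, c * (∑ i, |a i|) ≤ ‖∑ i, a i • v i‖

namespace SpanCopy
variable {n : ℕ} {v : Fin n → X}

def eqv (v : Fin n → X) : SpanCopy v ≃ (Fin n → ℝ) where
  toFun := SpanCopy.c
  invFun := SpanCopy.mk
  left_inv := fun _ => rfl
  right_inv := fun _ => rfl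

instance : AddCommGroup (SpanCopy v) := (eqv v).addCommGroup
instance : Module ℝ (SpanCopy v) := (eqv v).module ℝ

@[simp] lemma c_add (a b : SpanCopy v) : (a + b).c = a.c + b.c := rfl
@[simp] lemma c_smul (r : ℝ) (a : SpanCopy v) : (r • a).c = r • a.c := rfl
@[simp] lemma c_zero : (0 : SpanCopy v).c = 0 := rfl

/-- the canonical map to `X`, as a linear map. -/
def toX (v : Fin n → X) : SpanCopy v →ₗ[ℝ] X where
  toFun e := ∑ i, e.c i • v i
  map_add' a b := by simp [add_smul, Finset.sum_add_distrib]
  map_smul' r a := by simp [Finset.smul_sum, smul_smul]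

lemma toX_apply (e : SpanCopy v) : toX v e = ∑ i, e.c i • v i := rfl

variable [GoodFam v]

lemma exists_good : ∃ c : ℝ, 0 < c ∧ ∀ e : SpanCopy v, c * (∑ i, |e.c i|) ≤ ‖toX v e‖ := by
  obtain ⟨c, hc, h⟩ := GoodFam.out (v := v)
  exact ⟨c, hc, fun e => h e.c⟩

instance : NormedAddCommGroup (SpanCopy v) :=
  AddGroupNorm.toNormedAddCommGroup
    { toFun := fun e => ‖toX v e‖
      map_zero' := by simp
      add_le' := fun a b => by simpa using norm_add_le (toX v a) (toX v b)
      neg' := fun a => by simp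
      eq_zero_of_map_eq_zero' := by
        intro e he
        obtain ⟨c, hc, h⟩ := exists_good (v := v)
        have h2 := h e
        rw [show ‖toX v e‖ = 0 from he] at h2
        have : ∑ i, |e.c i| ≤ 0 := by nlinarith
        have h3 : ∀ i, e.c i = 0 := by
          intro i
          have : ∑ i, |e.c i| = 0 :=
            le_antisymm this (Finset.sum_nonneg fun i _ => abs_nonneg _)
          have := (Finset.sum_eq_zero_iff_of_nonneg (fun i _ => abs_nonneg (e.c i))).1 this i
            (Finset.mem_univ i)
          exact abs_eq_zero.1 this
        cases e with
        | mk a =>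
          have : a = (fun _ => (0:ℝ)) := funext fun i => h3 i
          subst this
          rfl }

@[simp] lemma norm_def (e : SpanCopy v) : ‖e‖ = ‖toX v e‖ := rfl

instance : NormedSpace ℝ (SpanCopy v) where
  norm_smul_le r e := by
    rw [norm_def, norm_def, map_smul, norm_smul]

def linEqvPi (v : Fin n → X) : SpanCopy v ≃ₗ[ℝ] (Fin n → ℝ) where
  toFun := SpanCopy.c
  invFun := SpanCopy.mk
  map_add' := fun _ _ => rfl
  map_smul' := fun _ _ => rfl
  left_inv := fun _ => rfl
  right_inv := fun _ => rfl

instance : FiniteDimensional ℝ (SpanCopy v) :=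
  Module.Finite.equiv (linEqvPi v).symm

/-- A linear map out of `SpanCopy v` determined by images `w` of the canonical basis. -/
def mkCLM (v : Fin n → X) [GoodFam v] (w : Fin n → X) : SpanCopy v →L[ℝ] X :=
  LinearMap.toContinuousLinearMap
    { toFun := fun e => ∑ i, e.c i • w i
      map_add' := fun a b => by simp [add_smul, Finset.sum_add_distrib]
      map_smul' := fun r a => by simp [Finset.smul_sum, smul_smul] }

@[simp] lemma mkCLM_apply (w : Fin n → X) (e : SpanCopy v) :
    mkCLM v w e = ∑ i, e.c i • w i := rfl

/-- canonical basis vector -/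
def bv (v : Fin n → X) (i : Fin n) : SpanCopy v := ⟨Pi.single i 1⟩

@[simp] lemma toX_bv [GoodFam v] (i : Fin n) : toX v (bv v i) = v i := by
  simp [toX_apply, bv, Pi.single_apply]

@[simp] lemma mkCLM_bv (w : Fin n → X) (i : Fin n) : mkCLM v w (bv v i) = w i := by
  simp [bv, Pi.single_apply]

lemma norm_bv (i : Fin n) : ‖bv v i‖ = ‖v i‖ := by rw [norm_def, toX_bv]

end SpanCopy
end T



section OneTwo
variable {X : Type*} [NormedAddCommGroup X] [NormedSpace ℝ X]

@[simp] lemma toCLM_apply {Y : Type*} [NormedAddCommGroup Y] [NormedSpace ℝ Y]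
    (T : X ≃ₗᵢ[ℝ] Y) (x : X) : toCLM T x = T x := rfl

lemma opNorm_le_basis {E : Type*} [NormedAddCommGroup E] [NormedSpace ℝ E]
    [FiniteDimensional ℝ E] {m : ℕ} (b : Module.Basis (Fin m) ℝ E) (h : E →L[ℝ] X) :
    ‖h‖ ≤ ∑ i, ‖LinearMap.toContinuousLinearMap (b.coord i)‖ * ‖h (b i)‖ := by
  apply ContinuousLinearMap.opNorm_le_bound _
    (Finset.sum_nonneg fun i _ => mul_nonneg (norm_nonneg _) (norm_nonneg _))
  intro x
  have hx : h x = ∑ i, b.repr x i • h (b i) := by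
    conv_lhs => rw [← b.sum_repr x]
    rw [map_sum]
    simp
  rw [hx, Finset.sum_mul]
  refine (norm_sum_le _ _).trans (Finset.sum_le_sum fun i _ => ?_)
  rw [norm_smul]
  have hco : ‖b.repr x i‖ ≤ ‖LinearMap.toContinuousLinearMap (b.coord i)‖ * ‖x‖ := by
    have := (LinearMap.toContinuousLinearMap (b.coord i)).le_opNorm x
    simpa [LinearMap.coe_toContinuousLinearMap', Module.Basis.coord_apply] using this
  calc ‖b.repr x i‖ * ‖h (b i)‖
      ≤ (‖LinearMap.toContinuousLinearMap (b.coord i)‖ * ‖x‖) * ‖h (b i)‖ :=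
        mul_le_mul_of_nonneg_right hco (norm_nonneg _)
    _ = ‖LinearMap.toContinuousLinearMap (b.coord i)‖ * ‖h (b i)‖ * ‖x‖ := by ring

lemma one_two (h1 : OmegaCategorical X) (E : FinNormedSpace) (C : ℝ) (hC : 0 ≤ C) :
    TotallyBoundedModIso E.carrier X C := by
  classical
  intro ε hε
  set n := Module.finrank ℝ E.carrier with hn
  set b : Module.Basis (Fin n) ℝ E.carrier := Module.finBasis ℝ E.carrier with hb
  set κ : ℝ := ∑ i, ‖LinearMap.toContinuousLinearMap (b.coord i)‖ with hκ
  have hκ0 : 0 ≤ κ := Finset.sum_nonneg fun i _ => norm_nonneg _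
  set M : ℝ := 1 + ∑ i, ‖b i‖ with hM
  have hM0 : 0 < M := by
    have : (0:ℝ) ≤ ∑ i, ‖b i‖ := Finset.sum_nonneg fun i _ => norm_nonneg _
    linarith
  have hbM : ∀ i, ‖b i‖ ≤ M := by
    intro i
    have h1' : ‖b i‖ ≤ ∑ j, ‖b j‖ :=
      Finset.single_le_sum (fun j _ => norm_nonneg (b j)) (Finset.mem_univ i)
    linarith
  have hexpC : (1:ℝ) ≤ exp C := by
    calc (1:ℝ) = exp 0 := (Real.exp_zero).symm
    _ ≤ exp C := Real.exp_le_exp.2 hC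
  set δ : ℝ := ε / (2 * M * exp C * (κ + 1)) with hδdef
  have hδ : 0 < δ := by
    apply div_pos hε
    exact mul_pos (mul_pos (by linarith) (Real.exp_pos C)) (by linarith)
  obtain ⟨S₀, hS₀fin, _, hS₀⟩ := h1 n δ hδ
  -- scaled basis images
  set Y : (E.carrier →L[ℝ] X) → Fin n → X := fun f i => (exp (-C) / M) • f (b i) with hY
  have hYnorm : ∀ f : E.carrier →L[ℝ] X, IsEmbC C f → ∀ i, ‖Y f i‖ ≤ 1 := by
    intro f hf i
    rw [hY]
    simp only [norm_smul, Real.norm_eq_abs]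
    have h2 := (hf (b i)).2
    have hpos : 0 < exp (-C) / M := div_pos (Real.exp_pos _) hM0
    rw [abs_of_pos hpos]
    calc exp (-C) / M * ‖f (b i)‖ ≤ exp (-C) / M * (exp C * ‖b i‖) := by
          apply mul_le_mul_of_nonneg_left h2 hpos.le
      _ = (exp (-C) * exp C) * (‖b i‖ / M) := by ring
      _ = ‖b i‖ / M := by rw [← Real.exp_add]; simp
      _ ≤ 1 := by rw [div_le_one hM0]; exact hbM i
  set P : (Fin n → X) → Prop := fun x => ∃ g : E.carrier →L[ℝ] X, IsEmbC C g ∧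
    ∃ T : X ≃ₗᵢ[ℝ] X, ∀ i, ‖Y g i - T (x i)‖ < δ with hP
  set F : (Fin n → X) → (E.carrier →L[ℝ] X) := fun x => if hx : P x then hx.choose else 0 with hF
  refine ⟨F '' {x ∈ S₀ | P x}, (hS₀fin.subset (Set.sep_subset _ _)).image F, ?_, ?_⟩
  · rintro g ⟨x, ⟨hxS, hxP⟩, rfl⟩
    rw [hF]; simp only [dif_pos hxP]
    exact hxP.choose_spec.1
  · intro f hf
    obtain ⟨x, hxS, T, hT⟩ := hS₀ (Y f) (hYnorm f hf)
    have hxP : P x := ⟨f, hf, T, hT⟩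
    refine ⟨F x, ⟨x, ⟨hxS, hxP⟩, rfl⟩, ?_⟩
    have hg := hxP.choose_spec
    set g := hxP.choose with hgdef
    have hFx : F x = g := by rw [hF]; simp only [dif_pos hxP]; rfl
    obtain ⟨hgemb, T', hT'⟩ := hg
    refine ⟨T'.symm.trans T, ?_⟩
    set U : X ≃ₗᵢ[ℝ] X := T'.symm.trans T with hU
    have key : ∀ i, ‖f (b i) - U (g (b i))‖ ≤ 2 * δ * (M * exp C) := by
      intro i
      have e1 : f (b i) = (M * exp C) • Y f i := by
        rw [hY]; rw [smul_smul]
        have : M * exp C * (exp (-C) / M) = exp C * exp (-C) := by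
          field_simp
        rw [this, ← Real.exp_add]; simp
      have e2 : g (b i) = (M * exp C) • Y g i := by
        rw [hY]; rw [smul_smul]
        have : M * exp C * (exp (-C) / M) = exp C * exp (-C) := by
          field_simp
        rw [this, ← Real.exp_add]; simp
      rw [e1, e2, map_smul, ← smul_sub, norm_smul, Real.norm_eq_abs]
      have hMe : |M * exp C| = M * exp C := abs_of_pos (by positivity)
      rw [hMe]
      have h3 : ‖Y f i - U (Y g i)‖ ≤ 2 * δ := by
        have t1 : ‖Y f i - T (x i)‖ < δ := hT i
        have t2 : ‖T (x i) - U (Y g i)‖ = ‖T' (x i) - Y g i‖ := by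
          rw [hU]
          have : U (Y g i) = T (T'.symm (Y g i)) := rfl
          rw [this, ← map_sub, T.norm_map, ← T'.norm_map, map_sub,
            T'.apply_symm_apply]
        have t3 : ‖T' (x i) - Y g i‖ < δ := by
          rw [norm_sub_rev]; exact hT' i
        calc ‖Y f i - U (Y g i)‖ ≤ ‖Y f i - T (x i)‖ + ‖T (x i) - U (Y g i)‖ :=
              norm_sub_le_norm_sub_add_norm_sub _ _ _
          _ ≤ 2 * δ := by rw [t2]; linarith
      calc M * exp C * ‖Y f i - U (Y g i)‖ ≤ M * exp C * (2 * δ) :=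
            mul_le_mul_of_nonneg_left h3 (by positivity)
        _ = 2 * δ * (M * exp C) := by ring
    rw [hFx]
    have hle : ‖f - (toCLM U).comp g‖ ≤ κ * (2 * δ * (M * exp C)) := by
      refine (opNorm_le_basis b _).trans ?_
      rw [hκ, Finset.sum_mul]
      refine Finset.sum_le_sum fun i _ => ?_
      have : ‖(f - (toCLM U).comp g) (b i)‖ ≤ 2 * δ * (M * exp C) := by
        simpa using key i
      exact mul_le_mul_of_nonneg_left this (norm_nonneg _)
    have hfinal : κ * (2 * δ * (M * exp C)) < ε := by
      have h2 : 2 * δ * (M * exp C) = ε / (κ + 1) := by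
        rw [hδdef]
        field_simp
      rw [h2]
      have : κ / (κ + 1) < 1 := by
        rw [div_lt_one (by linarith)]
        linarith
      calc κ * (ε / (κ+1)) = (κ/(κ+1)) * ε := by ring
        _ < 1 * ε := by
            apply mul_lt_mul_of_pos_right this hε
        _ = ε := one_mul ε
    exact lt_of_le_of_lt hle hfinal

end OneTwo


section ThreeOne
variable {X : Type*} [NormedAddCommGroup X] [NormedSpace ℝ X]

lemma exists_far (hinf : ¬ FiniteDimensional ℝ X) (s : Set X) (hs : s.Finite) :
    ∃ z : X, ‖z‖ ≤ 1 ∧ ∀ w ∈ Submodule.span ℝ s, (1:ℝ)/2 ≤ ‖z - w‖ := by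
  set F := Submodule.span ℝ s with hF
  haveI : FiniteDimensional ℝ F := FiniteDimensional.span_of_finite ℝ hs
  have hFc : IsClosed (F : Set X) := Submodule.closed_of_finiteDimensional F
  have hFne : ∃ x : X, x ∉ F := by
    by_contra h
    push_neg at h
    have : F = ⊤ := by
      apply Submodule.eq_top_iff'.2 h
    exact hinf (Module.Finite.equiv (this ▸ Submodule.topEquiv))
  obtain ⟨x₀, hx₀, hfar⟩ := riesz_lemma (𝕜 := ℝ) hFc hFne (r := 1/2) (by norm_num)
  have hx₀0 : x₀ ≠ 0 := fun h => hx₀ (h ▸ F.zero_mem)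
  have hn0 : (0:ℝ) < ‖x₀‖ := norm_pos_iff.2 hx₀0
  refine ⟨‖x₀‖⁻¹ • x₀, by
    rw [norm_smul, Real.norm_eq_abs, abs_of_pos (by positivity), inv_mul_cancel₀ hn0.ne'], ?_⟩
  intro w hw
  have hw' : ‖x₀‖ • w ∈ F := F.smul_mem _ hw
  have hkey : (1:ℝ)/2 * ‖x₀‖ ≤ ‖x₀ - ‖x₀‖ • w‖ := hfar _ hw'
  have heq : ‖‖x₀‖⁻¹ • x₀ - w‖ = ‖x₀‖⁻¹ * ‖x₀ - ‖x₀‖ • w‖ := by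
    have h1 : ‖x₀‖⁻¹ • x₀ - w = ‖x₀‖⁻¹ • (x₀ - ‖x₀‖ • w) := by
      rw [smul_sub, smul_smul, inv_mul_cancel₀ hn0.ne', one_smul]
    rw [h1, norm_smul, Real.norm_eq_abs, abs_of_pos (by positivity)]
  rw [heq]
  calc (1:ℝ)/2 = ‖x₀‖⁻¹ * ((1/2) * ‖x₀‖) := by field_simp
    _ ≤ ‖x₀‖⁻¹ * ‖x₀ - ‖x₀‖ • w‖ := by
        apply mul_le_mul_of_nonneg_left hkey (by positivity)

/-- An almost-orthogonal sequence relative to a finite family `y`. -/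
lemma exists_riesz_seq (hinf : ¬ FiniteDimensional ℝ X) {m : ℕ} (y : Fin m → X) (n : ℕ) :
    ∃ z : ℕ → X, ∀ i < n, ‖z i‖ ≤ 1 ∧
      ∀ w ∈ Submodule.span ℝ (Set.range y ∪ z '' Set.Iio i), (1:ℝ)/2 ≤ ‖z i - w‖ := by
  induction n with
  | zero => exact ⟨fun _ => 0, fun i hi => absurd hi (Nat.not_lt_zero i)⟩
  | succ n ih =>
    obtain ⟨z, hz⟩ := ih
    have hsfin : (Set.range y ∪ z '' Set.Iio n).Finite :=
      (Set.finite_range y).union ((Set.finite_Iio n).image z)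
    obtain ⟨znew, hzn1, hzn2⟩ := exists_far hinf _ hsfin
    refine ⟨Function.update z n znew, ?_⟩
    intro i hi
    rcases Nat.lt_succ_iff_lt_or_eq.1 hi with hi' | heq
    · have hupd : ∀ j < i, Function.update z n znew j = z j := by
        intro j hj
        exact Function.update_of_ne (by omega) _ _
      have himg : Function.update z n znew '' Set.Iio i = z '' Set.Iio i := by
        apply Set.image_congr
        intro j hj
        exact hupd j hj
      have hii : Function.update z n znew i = z i := Function.update_of_ne (by omega) _ _
      rw [hii, himg]
      exact hz i hi'
    · subst heq
      have himg : Function.update z i znew '' Set.Iio i = z '' Set.Iio i := by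
        apply Set.image_congr
        intro j hj
        exact Function.update_of_ne (by simp at hj; omega) _ _
      have hii : Function.update z i znew i = znew := Function.update_self _ _ _
      rw [hii, himg]
      exact ⟨hzn1, hzn2⟩


/-- The uniform lower-bound constant for perturbed tuples. -/
def goodc (n : ℕ) (η : ℝ) : ℝ := η * (1/(4*n))^n / (4*n)

lemma goodc_pos {n : ℕ} (hn : 0 < n) {η : ℝ} (hη : 0 < η) : 0 < goodc n η := by
  have h4n : (0:ℝ) < 4*n := by positivity
  unfold goodc
  positivity

lemma perturb (hinf : ¬ FiniteDimensional ℝ X) {n : ℕ} (hn : 0 < n) {η : ℝ}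
    (hη0 : 0 < η) (hη1 : η < 1) (y : Fin n → X) (hy : ∀ i, ‖y i‖ ≤ 1) :
    ∃ y' : Fin n → X, (∀ i, ‖y' i‖ ≤ 1) ∧ (∀ i, ‖y i - y' i‖ ≤ 2*η) ∧
      ∀ a : Fin n → ℝ, goodc n η * ∑ i, |a i| ≤ ‖∑ i, a i • y' i‖ := by
  classical
  set β : ℝ := 1/(4*n) with hβ
  have hn' : (1:ℝ) ≤ n := by exact_mod_cast hn
  have hβ0 : 0 < β := by rw [hβ]; positivity
  have hβ4 : β ≤ 1/4 := by
    rw [hβ, div_le_div_iff₀ (by positivity) (by norm_num)]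
    nlinarith
  have hβ1 : β ≤ 1 := by linarith
  set cc : Fin n → ℝ := fun i => η * β^(i.val+1) with hcc
  have hcc0 : ∀ i, 0 < cc i := fun i => by rw [hcc]; positivity
  have hccle : ∀ i, cc i ≤ η/4 := by
    intro i
    rw [hcc]
    have h1 : β^(i.val+1) ≤ β^1 := pow_le_pow_of_le_one hβ0.le hβ1 (by omega)
    simp only [pow_one] at h1
    nlinarith
  obtain ⟨z, hz⟩ := exists_riesz_seq hinf y n
  have hznorm : ∀ i : Fin n, ‖z i.val‖ ≤ 1 := fun i => (hz i.val i.isLt).1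
  set y' : Fin n → X := fun i => (1-η) • y i + (cc i) • z i.val with hy'
  refine ⟨y', ?_, ?_, ?_⟩
  · intro i
    rw [hy']
    calc ‖(1-η) • y i + cc i • z i.val‖ ≤ ‖(1-η) • y i‖ + ‖cc i • z i.val‖ := norm_add_le _ _
      _ = |1-η| * ‖y i‖ + |cc i| * ‖z i.val‖ := by rw [norm_smul, norm_smul]; simp [Real.norm_eq_abs]
      _ ≤ (1-η) * 1 + (η/4) * 1 := by
          rw [abs_of_pos (by linarith), abs_of_pos (hcc0 i)]
          have := hy i
          have := hznorm i
          have := hccle i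
          have := hcc0 i
          apply add_le_add
          · nlinarith
          · nlinarith
      _ ≤ 1 := by linarith
  · intro i
    have hdiff : y i - y' i = η • y i - cc i • z i.val := by
      rw [hy']
      module
    rw [hdiff]
    calc ‖η • y i - cc i • z i.val‖ ≤ ‖η • y i‖ + ‖cc i • z i.val‖ := norm_sub_le _ _
      _ ≤ η * 1 + (η/4) * 1 := by
          rw [norm_smul, norm_smul, Real.norm_eq_abs, Real.norm_eq_abs,
            abs_of_pos hη0, abs_of_pos (hcc0 i)]
          apply add_le_add
          · nlinarith [hy i]
          · nlinarith [hznorm i, hccle i, hcc0 i]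
      _ ≤ 2*η := by linarith
  · intro a
    by_cases hs0 : ∀ i, a i = 0
    · have : ∑ i, |a i| = 0 := Finset.sum_eq_zero fun i _ => by rw [hs0 i, abs_zero]
      rw [this, mul_zero]
      exact norm_nonneg _
    push_neg at hs0
    obtain ⟨i₁, hi₁⟩ := hs0
    obtain ⟨i₀, -, hmax⟩ := Finset.exists_max_image Finset.univ (fun i => |a i|)
      ⟨i₁, Finset.mem_univ _⟩
    have hmax' : ∀ j, |a j| ≤ |a i₀| := fun j => hmax j (Finset.mem_univ j)
    have hai₀ : 0 < |a i₀| := lt_of_lt_of_le (abs_pos.2 hi₁) (hmax' i₁)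
    -- rewrite the sum
    have hsum : ∑ i, a i • y' i
        = ∑ i, ((1-η) * a i) • y i + ∑ i, (a i * cc i) • z i.val := by
      rw [← Finset.sum_add_distrib]
      apply Finset.sum_congr rfl
      intro i _
      rw [hy']
      rw [smul_add, smul_smul, smul_smul]
      ring_nf
    -- split the z-sum
    have herase : Finset.univ.erase i₀ = Finset.Iio i₀ ∪ Finset.Ioi i₀ := by
      ext j
      simp only [Finset.mem_erase, Finset.mem_univ, and_true, Finset.mem_union,
        Finset.mem_Iio, Finset.mem_Ioi]
      constructor
      · intro h; exact lt_or_gt_of_ne h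
      · intro h; rcases h with h | h
        · exact ne_of_lt h
        · exact ne_of_gt h
    have hdisj : Disjoint (Finset.Iio i₀) (Finset.Ioi i₀) := by
      rw [Finset.disjoint_left]
      intro j hj hj'
      simp only [Finset.mem_Iio] at hj
      simp only [Finset.mem_Ioi] at hj'
      exact absurd (lt_trans hj hj') (lt_irrefl _)
    have hzsplit : ∑ i, (a i * cc i) • z i.val
        = (a i₀ * cc i₀) • z i₀.val
          + (∑ i ∈ Finset.Iio i₀, (a i * cc i) • z i.val
            + ∑ i ∈ Finset.Ioi i₀, (a i * cc i) • z i.val) := by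
      rw [← Finset.add_sum_erase _ _ (Finset.mem_univ i₀), herase,
        Finset.sum_union hdisj]
    set s0 : ℝ := a i₀ * cc i₀ with hs0def
    set u : X := ∑ i, ((1-η) * a i) • y i + ∑ i ∈ Finset.Iio i₀, (a i * cc i) • z i.val with hu
    set t : X := ∑ i ∈ Finset.Ioi i₀, (a i * cc i) • z i.val with ht
    have htotal : ∑ i, a i • y' i = (u + s0 • z i₀.val) + t := by
      rw [hsum, hzsplit, hu, ht]
      abel
    have hs0ne : s0 ≠ 0 := by
      rw [hs0def]
      exact mul_ne_zero (abs_pos.1 hai₀) (hcc0 i₀).ne'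
    have habs : |s0| = |a i₀| * cc i₀ := by
      rw [hs0def, abs_mul, abs_of_pos (hcc0 i₀)]
    -- u is in the span
    have huspan : u ∈ Submodule.span ℝ (Set.range y ∪ z '' Set.Iio i₀.val) := by
      rw [hu]
      apply Submodule.add_mem
      · apply Submodule.sum_mem
        intro i _
        apply Submodule.smul_mem
        apply Submodule.subset_span
        exact Set.mem_union_left _ ⟨i, rfl⟩
      · apply Submodule.sum_mem
        intro i hi
        apply Submodule.smul_mem
        apply Submodule.subset_span
        apply Set.mem_union_right
        exact ⟨i.val, Finset.mem_Iio.1 hi, rfl⟩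
    -- lower bound for ‖u + s0 • z i₀‖
    have hbound1 : |s0| / 2 ≤ ‖u + s0 • z i₀.val‖ := by
      have hw : (-(s0⁻¹)) • u ∈ Submodule.span ℝ (Set.range y ∪ z '' Set.Iio i₀.val) :=
        Submodule.smul_mem _ _ huspan
      have h12 := (hz i₀.val i₀.isLt).2 _ hw
      have heq : z i₀.val - (-(s0⁻¹)) • u = s0⁻¹ • (u + s0 • z i₀.val) := by
        match_scalars <;> field_simp
      rw [heq, norm_smul, Real.norm_eq_abs, abs_inv] at h12
      have h13 := mul_le_mul_of_nonneg_left h12 (abs_nonneg s0)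
      rw [← mul_assoc, mul_inv_cancel₀ (abs_ne_zero.2 hs0ne), one_mul] at h13
      linarith
    -- upper bound for ‖t‖
    have hbound2 : ‖t‖ ≤ |s0| / 4 := by
      rw [ht]
      calc ‖∑ i ∈ Finset.Ioi i₀, (a i * cc i) • z i.val‖
          ≤ ∑ i ∈ Finset.Ioi i₀, ‖(a i * cc i) • z i.val‖ := norm_sum_le _ _
        _ ≤ ∑ i ∈ Finset.Ioi i₀, |a i₀| * (η * β^(i₀.val+2)) := by
            apply Finset.sum_le_sum
            intro i hi
            rw [norm_smul, Real.norm_eq_abs, abs_mul, abs_of_pos (hcc0 i)]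
            have hlt : i₀ < i := Finset.mem_Ioi.1 hi
            have hpow : β^(i.val+1) ≤ β^(i₀.val+2) := by
              apply pow_le_pow_of_le_one hβ0.le hβ1
              have : i₀.val < i.val := hlt
              omega
            have h1 : cc i ≤ η * β^(i₀.val+2) := by
              rw [hcc]
              exact mul_le_mul_of_nonneg_left hpow hη0.le
            calc |a i| * cc i * ‖z i.val‖ ≤ |a i| * cc i * 1 := by
                  apply mul_le_mul_of_nonneg_left (hznorm i)
                  positivity
              _ = |a i| * cc i := mul_one _
              _ ≤ |a i₀| * (η * β^(i₀.val+2)) := by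
                  apply mul_le_mul (hmax' i) h1 (hcc0 i).le (abs_nonneg _)
        _ ≤ n * (|a i₀| * (η * β^(i₀.val+2))) := by
            rw [Finset.sum_const, nsmul_eq_mul]
            apply mul_le_mul_of_nonneg_right _ (by positivity)
            have := Finset.card_le_univ (Finset.Ioi i₀)
            simp only [Finset.card_univ, Fintype.card_fin] at this
            exact_mod_cast this
        _ ≤ |s0| / 4 := by
            rw [habs, hcc]
            have : (n:ℝ) * (|a i₀| * (η * β^(i₀.val+2)))
                = |a i₀| * (η * β^(i₀.val+1)) * (n * β) := by ring
            rw [this]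
            have hnβ : (n:ℝ) * β = 1/4 := by
              rw [hβ]
              field_simp
            rw [hnβ]
            ring_nf
            linarith [le_refl (|a i₀| * (η * β^(i₀.val+1)) * (1/4))]
    -- conclude
    have hfinal : |s0| / 4 ≤ ‖∑ i, a i • y' i‖ := by
      rw [htotal]
      calc |s0|/4 = |s0|/2 - |s0|/4 := by ring
        _ ≤ ‖u + s0 • z i₀.val‖ - ‖t‖ := by
            apply sub_le_sub hbound1 hbound2
        _ ≤ ‖(u + s0 • z i₀.val) + t‖ := by
            have := norm_add_le ((u + s0 • z i₀.val) + t) (-t)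
            simp only [add_neg_cancel_right, norm_neg] at this
            linarith
    have hsle : ∑ i, |a i| ≤ n * |a i₀| := by
      calc ∑ i, |a i| ≤ ∑ _i : Fin n, |a i₀| := Finset.sum_le_sum fun i _ => hmax' i
        _ = n * |a i₀| := by rw [Finset.sum_const, nsmul_eq_mul, Finset.card_univ,
            Fintype.card_fin]
    have hpowc : β^n ≤ β^(i₀.val+1) := pow_le_pow_of_le_one hβ0.le hβ1 (by omega)
    calc goodc n η * ∑ i, |a i| ≤ goodc n η * (n * |a i₀|) := by
          apply mul_le_mul_of_nonneg_left hsle (goodc_pos hn hη0).le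
      _ ≤ |s0|/4 := by
          unfold goodc
          rw [habs, hcc, ← hβ]
          have h1 : η * β^n / (4*n) * (n * |a i₀|) = |a i₀| * (η * β^n) / 4 := by
            field_simp
          rw [h1]
          have h2 : |a i₀| * (η * β^n) ≤ |a i₀| * (η * β^(i₀.val+1)) := by
            apply mul_le_mul_of_nonneg_left _ (abs_nonneg _)
            exact mul_le_mul_of_nonneg_left hpowc hη0.le
          linarith
      _ ≤ ‖∑ i, a i • y' i‖ := hfinal


lemma pnorm_lip {n : ℕ} (w : Fin n → X) (hw : ∀ i, ‖w i‖ ≤ 1) (a b : Fin n → ℝ) :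
    |‖∑ i, a i • w i‖ - ‖∑ i, b i • w i‖| ≤ ∑ i, |a i - b i| := by
  refine (abs_norm_sub_norm_le _ _).trans ?_
  have hh : ∑ i, a i • w i - ∑ i, b i • w i = ∑ i, (a i - b i) • w i := by
    rw [← Finset.sum_sub_distrib]
    exact Finset.sum_congr rfl fun i _ => (sub_smul _ _ _).symm
  rw [hh]
  refine (norm_sum_le _ _).trans (Finset.sum_le_sum fun i _ => ?_)
  rw [norm_smul, Real.norm_eq_abs]
  calc |a i - b i| * ‖w i‖ ≤ |a i - b i| * 1 :=
        mul_le_mul_of_nonneg_left (hw i) (abs_nonneg _)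
    _ = |a i - b i| := mul_one _

lemma l1_le_n_dist {n : ℕ} (a b : Fin n → ℝ) : ∑ i, |a i - b i| ≤ n * dist a b := by
  calc ∑ i, |a i - b i| = ∑ i, dist (a i) (b i) := by
        exact Finset.sum_congr rfl fun i _ => (Real.dist_eq _ _).symm
    _ ≤ ∑ _i : Fin n, dist a b := Finset.sum_le_sum fun i _ => dist_le_pi_dist a b i
    _ = n * dist a b := by rw [Finset.sum_const, nsmul_eq_mul, Finset.card_univ,
        Fintype.card_fin]

lemma seminorm_net {n : ℕ} {c δ : ℝ} (hc : 0 < c) (hδ : 0 < δ) :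
    ∃ J : Set (Fin n → X), J.Finite ∧
      (∀ v ∈ J, (∀ i, ‖v i‖ ≤ 1) ∧ ∀ a : Fin n → ℝ, c * ∑ i, |a i| ≤ ‖∑ i, a i • v i‖) ∧
      ∀ y : Fin n → X, (∀ i, ‖y i‖ ≤ 1) → (∀ a : Fin n → ℝ, c * ∑ i, |a i| ≤ ‖∑ i, a i • y i‖) →
        ∃ v ∈ J, ∀ a : Fin n → ℝ, (∑ i, |a i|) ≤ 1 →
          |‖∑ i, a i • y i‖ - ‖∑ i, a i • v i‖| ≤ δ := by
  classical
  set D : (Fin n → X) → Prop := fun y =>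
    (∀ i, ‖y i‖ ≤ 1) ∧ ∀ a : Fin n → ℝ, c * ∑ i, |a i| ≤ ‖∑ i, a i • y i‖ with hD
  set r : ℝ := min (δ/(8*(n+1))) 1 with hr
  have hr0 : 0 < r := lt_min (by positivity) one_pos
  have hr1 : r ≤ 1 := min_le_right _ _
  have hrn : (n:ℝ) * r ≤ δ/8 := by
    have h1 : r ≤ δ/(8*(n+1)) := min_le_left _ _
    have h2 : (n:ℝ) ≤ n+1 := by linarith
    calc (n:ℝ) * r ≤ (n+1) * (δ/(8*(n+1))) := by
          apply mul_le_mul h2 h1 hr0.le (by positivity)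
      _ = δ/8 := by field_simp
  -- step 1 : a finite net for the ℓ¹ ball of coefficients
  have hK : IsCompact (closedBall (0 : Fin n → ℝ) 1) := isCompact_closedBall _ _
  obtain ⟨t, htfin, htcov⟩ := (Metric.totallyBounded_iff.1 hK.totallyBounded) r hr0
  set A : Set (Fin n → ℝ) := {a ∈ t | ‖a‖ ≤ 2} with hA
  have hAfin : A.Finite := htfin.subset (Set.sep_subset _ _)
  have hAnet : ∀ a : Fin n → ℝ, (∑ i, |a i|) ≤ 1 →
      ∃ a' ∈ A, ∑ i, |a i - a' i| ≤ δ/8 := by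
    intro a ha
    have haK : a ∈ closedBall (0 : Fin n → ℝ) 1 := by
      rw [mem_closedBall, dist_pi_le_iff zero_le_one]
      intro i
      rw [Real.dist_eq, Pi.zero_apply, sub_zero]
      exact le_trans (Finset.single_le_sum (fun j _ => abs_nonneg (a j))
        (Finset.mem_univ i)) ha
    obtain ⟨a', ha't, ha'ball⟩ := Set.mem_iUnion₂.1 (htcov haK)
    have hdist : dist a a' < r := mem_ball.1 ha'ball
    have hanorm : ‖a‖ ≤ 1 := by
      have := mem_closedBall.1 haK
      rwa [dist_zero_right] at this
    have ha'A : a' ∈ A := by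
      refine ⟨ha't, ?_⟩
      calc ‖a'‖ ≤ ‖a‖ + dist a a' := by
            rw [dist_eq_norm]
            have := norm_sub_norm_le a' a
            rw [norm_sub_rev] at this
            linarith [norm_sub_norm_le a a']
        _ ≤ 1 + 1 := add_le_add hanorm (le_trans hdist.le hr1)
        _ = 2 := by norm_num
    refine ⟨a', ha'A, ?_⟩
    calc ∑ i, |a i - a' i| ≤ n * dist a a' := l1_le_n_dist a a'
      _ ≤ n * r := mul_le_mul_of_nonneg_left hdist.le (Nat.cast_nonneg n)
      _ ≤ δ/8 := hrn
  haveI : Fintype ↥A := hAfin.fintype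
  -- step 2 : a finite net for the evaluation maps
  set Φ : (Fin n → X) → (↥A → ℝ) := fun y => fun a => ‖∑ i, (a:Fin n → ℝ) i • y i‖ with hΦ
  have hΦbdd : ∀ y, D y → Φ y ∈ closedBall (0 : ↥A → ℝ) (2*n) := by
    intro y hy
    rw [mem_closedBall, dist_pi_le_iff (by positivity)]
    intro a
    rw [Real.dist_eq, Pi.zero_apply, sub_zero, hΦ]
    simp only
    rw [abs_of_nonneg (norm_nonneg _)]
    calc ‖∑ i, (a:Fin n → ℝ) i • y i‖ ≤ ∑ i, ‖(a:Fin n → ℝ) i • y i‖ := norm_sum_le _ _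
      _ ≤ ∑ _i : Fin n, 2 := by
          apply Finset.sum_le_sum
          intro i _
          rw [norm_smul, Real.norm_eq_abs]
          have h1 : |(a:Fin n → ℝ) i| ≤ 2 := by
            have h2 : ‖(a:Fin n → ℝ)‖ ≤ 2 := a.2.2
            have h3 := norm_le_pi_norm (a : Fin n → ℝ) i
            calc |(a:Fin n → ℝ) i| = ‖(a:Fin n → ℝ) i‖ := (Real.norm_eq_abs _).symm
              _ ≤ ‖(a:Fin n → ℝ)‖ := h3
              _ ≤ 2 := h2
          calc |(a:Fin n → ℝ) i| * ‖y i‖ ≤ 2 * 1 :=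
                mul_le_mul h1 (hy.1 i) (norm_nonneg _) (by norm_num)
            _ = 2 := by norm_num
      _ = 2*n := by rw [Finset.sum_const, nsmul_eq_mul, Finset.card_univ,
            Fintype.card_fin]; ring
  have hK2 : IsCompact (closedBall (0 : ↥A → ℝ) (2*n)) := isCompact_closedBall _ _
  obtain ⟨t₂, ht₂fin, ht₂cov⟩ := (Metric.totallyBounded_iff.1 hK2.totallyBounded)
    (δ/4) (by positivity)
  set Q : (↥A → ℝ) → Prop := fun φ => ∃ y, D y ∧ Φ y ∈ ball φ (δ/4) with hQ
  set Rep : (↥A → ℝ) → (Fin n → X) := fun φ => if h : Q φ then h.choose else (fun _ => 0)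
    with hRep
  refine ⟨Rep '' {φ ∈ t₂ | Q φ}, (ht₂fin.subset (Set.sep_subset _ _)).image Rep, ?_, ?_⟩
  · rintro v ⟨φ, ⟨hφt, hφQ⟩, rfl⟩
    rw [hRep]
    simp only [dif_pos hφQ]
    exact ⟨hφQ.choose_spec.1.1, hφQ.choose_spec.1.2⟩
  · intro y hy1 hy2
    have hyD : D y := ⟨hy1, hy2⟩
    obtain ⟨φ, hφt, hφball⟩ := Set.mem_iUnion₂.1 (ht₂cov (hΦbdd y hyD))
    have hφQ : Q φ := ⟨y, hyD, hφball⟩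
    refine ⟨Rep φ, ⟨φ, ⟨hφt, hφQ⟩, rfl⟩, ?_⟩
    have hrep := hφQ.choose_spec
    set v : Fin n → X := Rep φ with hv
    have hveq : v = hφQ.choose := by rw [hv, hRep]; simp only [dif_pos hφQ]
    have hvD : D v := by rw [hveq]; exact hrep.1
    have hvball : Φ v ∈ ball φ (δ/4) := by rw [hveq]; exact hrep.2
    have hptwise : ∀ a : ↥A, |Φ y a - Φ v a| ≤ δ/2 := by
      intro a
      have h1 : dist (Φ y) (Φ v) < δ/2 := by
        calc dist (Φ y) (Φ v) ≤ dist (Φ y) φ + dist φ (Φ v) := dist_triangle _ _ _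
          _ < δ/4 + δ/4 := by
              apply add_lt_add (mem_ball.1 hφball)
              rw [dist_comm]; exact mem_ball.1 hvball
          _ = δ/2 := by ring
      calc |Φ y a - Φ v a| = dist (Φ y a) (Φ v a) := (Real.dist_eq _ _).symm
        _ ≤ dist (Φ y) (Φ v) := dist_le_pi_dist _ _ _
        _ ≤ δ/2 := h1.le
    intro a ha
    obtain ⟨a', ha'A, ha'close⟩ := hAnet a ha
    have h1 : |‖∑ i, a i • y i‖ - ‖∑ i, a' i • y i‖| ≤ δ/8 :=
      le_trans (pnorm_lip y hy1 a a') ha'close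
    have h2 : |‖∑ i, a i • v i‖ - ‖∑ i, a' i • v i‖| ≤ δ/8 :=
      le_trans (pnorm_lip v hvD.1 a a') ha'close
    have h3 : |‖∑ i, a' i • y i‖ - ‖∑ i, a' i • v i‖| ≤ δ/2 := hptwise ⟨a', ha'A⟩
    have hfin : |‖∑ i, a i • y i‖ - ‖∑ i, a i • v i‖| ≤ δ/8 + δ/2 + δ/8 := by
      have := abs_sub_abs_le_abs_sub (‖∑ i, a i • y i‖) (‖∑ i, a i • v i‖)
      have t1 := abs_sub (‖∑ i, a i • y i‖) (‖∑ i, a i • v i‖)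
      calc |‖∑ i, a i • y i‖ - ‖∑ i, a i • v i‖|
          ≤ |‖∑ i, a i • y i‖ - ‖∑ i, a' i • y i‖|
            + |‖∑ i, a' i • y i‖ - ‖∑ i, a i • v i‖| := abs_sub_le _ _ _
        _ ≤ |‖∑ i, a i • y i‖ - ‖∑ i, a' i • y i‖|
            + (|‖∑ i, a' i • y i‖ - ‖∑ i, a' i • v i‖|
              + |‖∑ i, a' i • v i‖ - ‖∑ i, a i • v i‖|) := by
            have := abs_sub_le (‖∑ i, a' i • y i‖) (‖∑ i, a' i • v i‖) (‖∑ i, a i • v i‖)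
            linarith
        _ ≤ δ/8 + (δ/2 + δ/8) := by
            apply add_le_add h1
            apply add_le_add h3
            rw [abs_sub_comm]
            exact h2
        _ = δ/8 + δ/2 + δ/8 := by ring
    linarith

end ThreeOne

section ThreeOneB
variable {X : Type*} [NormedAddCommGroup X] [NormedSpace ℝ X]

open SpanCopy

lemma mkCLM_embC {n : ℕ} (v : Fin n → X) [GoodFam v] (y : Fin n → X) {c C : ℝ}
    (hc : 0 < c) (hC : 0 < C)
    (hv : ∀ a : Fin n → ℝ, c * ∑ i, |a i| ≤ ‖∑ i, a i • v i‖)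
    (hclose : ∀ a : Fin n → ℝ, (∑ i, |a i|) ≤ 1 →
      |‖∑ i, a i • y i‖ - ‖∑ i, a i • v i‖| ≤ c * (1 - exp (-C))) :
    IsEmbC C (SpanCopy.mkCLM v y) := by
  intro e
  have hnorm : ‖e‖ = ‖∑ i, e.c i • v i‖ := by rw [SpanCopy.norm_def, SpanCopy.toX_apply]
  have happ : SpanCopy.mkCLM v y e = ∑ i, e.c i • y i := SpanCopy.mkCLM_apply y e
  set a : Fin n → ℝ := e.c with ha
  set s : ℝ := ∑ i, |a i| with hs
  have hs0 : 0 ≤ s := Finset.sum_nonneg fun i _ => abs_nonneg _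
  have hexpC1 : exp (-C) ≤ 1 := by
    rw [Real.exp_le_one_iff]
    linarith
  rcases eq_or_lt_of_le hs0 with hseq | hslt
  · -- all coefficients zero
    have hzero : ∀ i, a i = 0 := by
      intro i
      have := (Finset.sum_eq_zero_iff_of_nonneg (fun i _ => abs_nonneg (a i))).1 hseq.symm i
        (Finset.mem_univ i)
      exact abs_eq_zero.1 this
    have h1 : ‖e‖ = 0 := by
      rw [hnorm]
      have : ∑ i, e.c i • v i = 0 := Finset.sum_eq_zero fun i _ => by
        rw [show e.c i = a i from rfl, hzero i, zero_smul]
      rw [this, norm_zero]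
    have h2 : ‖SpanCopy.mkCLM v y e‖ = 0 := by
      rw [happ]
      have : ∑ i, e.c i • y i = 0 := Finset.sum_eq_zero fun i _ => by
        rw [show e.c i = a i from rfl, hzero i, zero_smul]
      rw [this, norm_zero]
    rw [h1, h2]
    norm_num
  · -- s > 0
    have hsne : s ≠ 0 := hslt.ne'
    have hnormed : (∑ i, |a i / s|) ≤ 1 := by
      have : ∀ i, |a i / s| = |a i| / s := fun i => by
        rw [abs_div, abs_of_pos hslt]
      rw [Finset.sum_congr rfl fun i _ => this i, ← Finset.sum_div, ← hs,
        div_self hsne]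
    have hkey := hclose (fun i => a i / s) hnormed
    have hscale : ∀ w : Fin n → X, ∑ i, (a i / s) • w i = s⁻¹ • ∑ i, a i • w i := by
      intro w
      rw [Finset.smul_sum]
      apply Finset.sum_congr rfl
      intro i _
      rw [smul_smul, div_eq_inv_mul]
    rw [hscale y, hscale v, norm_smul, norm_smul, Real.norm_eq_abs,
      abs_inv, abs_of_pos hslt] at hkey
    rw [← mul_sub, abs_mul, abs_of_pos (inv_pos.2 hslt)] at hkey
    have hkey2 : |‖∑ i, a i • y i‖ - ‖∑ i, a i • v i‖| ≤ c * (1 - exp (-C)) * s := by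
      have := mul_le_mul_of_nonneg_left hkey hslt.le
      rw [← mul_assoc, mul_inv_cancel₀ hsne, one_mul] at this
      calc |‖∑ i, a i • y i‖ - ‖∑ i, a i • v i‖| ≤ s * (c * (1 - exp (-C))) := this
        _ = c * (1 - exp (-C)) * s := by ring
    have hlow : c * s ≤ ‖e‖ := by rw [hnorm]; exact hv a
    have habs1 : ‖∑ i, a i • y i‖ - ‖∑ i, a i • v i‖ ≤ c * (1 - exp (-C)) * s :=
      le_trans (le_abs_self _) hkey2
    have habs2 : ‖∑ i, a i • v i‖ - ‖∑ i, a i • y i‖ ≤ c * (1 - exp (-C)) * s := by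
      rw [abs_sub_comm] at hkey2
      exact le_trans (le_abs_self _) hkey2
    have hcs : c * (1 - exp (-C)) * s = (1 - exp (-C)) * (c * s) := by ring
    have hbound : c * (1 - exp (-C)) * s ≤ (1 - exp (-C)) * ‖e‖ := by
      rw [hcs]
      apply mul_le_mul_of_nonneg_left hlow (by linarith)
    constructor
    · rw [happ]
      have : ‖e‖ - (1 - exp (-C)) * ‖e‖ ≤ ‖∑ i, a i • y i‖ := by
        rw [hnorm]
        have := habs2
        rw [← hnorm] at this ⊢
        rw [hnorm] at *
        linarith
      calc exp (-C) * ‖e‖ = ‖e‖ - (1 - exp (-C)) * ‖e‖ := by ring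
        _ ≤ ‖∑ i, a i • y i‖ := this
    · rw [happ]
      have hup : ‖∑ i, a i • y i‖ ≤ ‖e‖ + (1 - exp (-C)) * ‖e‖ := by
        rw [hnorm] at *
        linarith
      have h2exp : 2 - exp (-C) ≤ exp C := by
        have h1 : exp C * exp (-C) = 1 := by
          rw [← Real.exp_add]; simp
        nlinarith [Real.exp_pos C, sq_nonneg (exp C - 1), Real.exp_pos (-C)]
      calc ‖∑ i, a i • y i‖ ≤ ‖e‖ + (1 - exp (-C)) * ‖e‖ := hup
        _ = (2 - exp (-C)) * ‖e‖ := by ring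
        _ ≤ exp C * ‖e‖ := mul_le_mul_of_nonneg_right h2exp (norm_nonneg _)

lemma finRep_spanCopy {n : ℕ} (v : Fin n → X) [GoodFam v] :
    FinRep ⟨SpanCopy v⟩ X := by
  intro ε hε
  refine ⟨SpanCopy.mkCLM v v, ?_⟩
  intro e
  have h1 : SpanCopy.mkCLM v v e = SpanCopy.toX v e := by
    rw [SpanCopy.mkCLM_apply, SpanCopy.toX_apply]
  have h2 : ‖SpanCopy.mkCLM v v e‖ = ‖e‖ := by rw [h1, SpanCopy.norm_def]
  rw [h2]
  constructor
  · apply mul_le_of_le_one_left (norm_nonneg _)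
    rw [Real.exp_le_one_iff]
    linarith
  · have : (1:ℝ) ≤ exp ε := by
      rw [← Real.exp_zero]
      exact Real.exp_le_exp.2 hε.le
    nlinarith [norm_nonneg e]

lemma cover_of_TBMI {n : ℕ} (v : Fin n → X) [GoodFam v] {c C ε' : ℝ}
    (hc : 0 < c) (hC : 0 < C) (hε' : 0 < ε')
    (hvnorm : ∀ i, ‖v i‖ ≤ 1)
    (hv : ∀ a : Fin n → ℝ, c * ∑ i, |a i| ≤ ‖∑ i, a i • v i‖)
    (htb : TotallyBoundedModIso (SpanCopy v) X C) :
    ∃ Sv : Set (Fin n → X), Sv.Finite ∧ (∀ x ∈ Sv, ∀ i, ‖x i‖ ≤ 1) ∧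
      ∀ y : Fin n → X,
        (∀ a : Fin n → ℝ, (∑ i, |a i|) ≤ 1 →
          |‖∑ i, a i • y i‖ - ‖∑ i, a i • v i‖| ≤ c * (1 - exp (-C))) →
        ∃ x ∈ Sv, ∃ T : X ≃ₗᵢ[ℝ] X, ∀ i, ‖y i - T (x i)‖ < ε' + (exp C - 1) := by
  obtain ⟨S, hSfin, hSemb, hScov⟩ := htb ε' hε'
  have hbvnorm : ∀ i, ‖SpanCopy.bv v i‖ ≤ 1 := fun i => by
    rw [SpanCopy.norm_bv]; exact hvnorm i
  refine ⟨(fun g => fun i => exp (-C) • g (SpanCopy.bv v i)) '' S, hSfin.image _, ?_, ?_⟩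
  · rintro x ⟨g, hg, rfl⟩ i
    rw [norm_smul, Real.norm_eq_abs, abs_of_pos (Real.exp_pos _)]
    have h2 := (hSemb g hg (SpanCopy.bv v i)).2
    calc exp (-C) * ‖g (SpanCopy.bv v i)‖
        ≤ exp (-C) * (exp C * ‖SpanCopy.bv v i‖) :=
          mul_le_mul_of_nonneg_left h2 (Real.exp_pos _).le
      _ = (exp (-C) * exp C) * ‖SpanCopy.bv v i‖ := by ring
      _ = ‖SpanCopy.bv v i‖ := by rw [← Real.exp_add]; simp
      _ ≤ 1 := hbvnorm i
  · intro y hclose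
    have hemb : IsEmbC C (SpanCopy.mkCLM v y) := mkCLM_embC v y hc hC hv hclose
    obtain ⟨g, hgS, T, hT⟩ := hScov _ hemb
    refine ⟨_, ⟨g, hgS, rfl⟩, T, ?_⟩
    intro i
    have hyi : y i = SpanCopy.mkCLM v y (SpanCopy.bv v i) := (SpanCopy.mkCLM_bv y i).symm
    have h1 : ‖SpanCopy.mkCLM v y (SpanCopy.bv v i) - T (g (SpanCopy.bv v i))‖ < ε' := by
      have := (SpanCopy.mkCLM v y - (toCLM T).comp g).le_opNorm (SpanCopy.bv v i)
      have h2 : (SpanCopy.mkCLM v y - (toCLM T).comp g) (SpanCopy.bv v i)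
          = SpanCopy.mkCLM v y (SpanCopy.bv v i) - T (g (SpanCopy.bv v i)) := by
        simp [ContinuousLinearMap.sub_apply]
      rw [h2] at this
      calc ‖SpanCopy.mkCLM v y (SpanCopy.bv v i) - T (g (SpanCopy.bv v i))‖
          ≤ ‖SpanCopy.mkCLM v y - (toCLM T).comp g‖ * ‖SpanCopy.bv v i‖ := this
        _ ≤ ‖SpanCopy.mkCLM v y - (toCLM T).comp g‖ := by
            apply mul_le_of_le_one_right (norm_nonneg _) (hbvnorm i)
        _ < ε' := hT
    have h2 : ‖T (g (SpanCopy.bv v i)) - T (exp (-C) • g (SpanCopy.bv v i))‖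
        ≤ exp C - 1 := by
      rw [← map_sub, T.norm_map]
      have h3 : g (SpanCopy.bv v i) - exp (-C) • g (SpanCopy.bv v i)
          = (1 - exp (-C)) • g (SpanCopy.bv v i) := by
        rw [sub_smul, one_smul]
      rw [h3, norm_smul, Real.norm_eq_abs]
      have hpos : 0 ≤ 1 - exp (-C) := by
        have : exp (-C) ≤ 1 := by rw [Real.exp_le_one_iff]; linarith
        linarith
      rw [abs_of_nonneg hpos]
      have h4 := (hSemb g hgS (SpanCopy.bv v i)).2
      have h5 : ‖g (SpanCopy.bv v i)‖ ≤ exp C := by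
        calc ‖g (SpanCopy.bv v i)‖ ≤ exp C * ‖SpanCopy.bv v i‖ := h4
          _ ≤ exp C * 1 := mul_le_mul_of_nonneg_left (hbvnorm i) (Real.exp_pos _).le
          _ = exp C := mul_one _
      have hee : exp (-C) * exp C = 1 := by rw [← Real.exp_add]; simp
      calc (1 - exp (-C)) * ‖g (SpanCopy.bv v i)‖ ≤ (1 - exp (-C)) * exp C :=
            mul_le_mul_of_nonneg_left h5 hpos
        _ = exp C - exp (-C) * exp C := by ring
        _ = exp C - 1 := by rw [hee]
    calc ‖y i - T (exp (-C) • g (SpanCopy.bv v i))‖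
        ≤ ‖y i - T (g (SpanCopy.bv v i))‖
          + ‖T (g (SpanCopy.bv v i)) - T (exp (-C) • g (SpanCopy.bv v i))‖ :=
          norm_sub_le_norm_sub_add_norm_sub _ _ _
      _ < ε' + (exp C - 1) := by
          rw [hyi]
          exact add_lt_add_of_lt_of_le h1 h2

lemma three_one (hinf : ¬ FiniteDimensional ℝ X)
    (h3 : ∃ C' : ℝ, 0 < C' ∧ ∀ C : ℝ, 0 < C → C < C' →
      ∀ E : FinNormedSpace, FinRep E X → TotallyBoundedModIso E.carrier X C) :
    OmegaCategorical X := by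
  classical
  obtain ⟨C', hC'pos, h3⟩ := h3
  intro n ε hε
  by_cases hn : n = 0
  · subst hn
    refine ⟨{fun _ => 0}, Set.finite_singleton _, ?_, ?_⟩
    · rintro x rfl i
      exact i.elim0
    · intro y _
      exact ⟨_, rfl, LinearIsometryEquiv.refl ℝ X, fun i => i.elim0⟩
  have hn0 : 0 < n := Nat.pos_of_ne_zero hn
  set η : ℝ := min (ε/8) (1/2) with hη
  have hη0 : 0 < η := lt_min (by positivity) (by norm_num)
  have hη1 : η < 1 := lt_of_le_of_lt (min_le_right _ _) (by norm_num)
  have h2η : 2*η ≤ ε/4 := by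
    have := min_le_left (ε/8) (1/2)
    have : η ≤ ε/8 := this
    linarith
  set C : ℝ := min (C'/2) (Real.log (1 + ε/8)) with hCdef
  have hCpos : 0 < C := lt_min (by linarith) (Real.log_pos (by linarith))
  have hCltC' : C < C' := lt_of_le_of_lt (min_le_left _ _) (by linarith)
  have hexpC : exp C - 1 ≤ ε/8 := by
    have h1 : C ≤ Real.log (1 + ε/8) := min_le_right _ _
    have h2 : exp C ≤ 1 + ε/8 := by
      calc exp C ≤ exp (Real.log (1 + ε/8)) := Real.exp_le_exp.2 h1
        _ = 1 + ε/8 := Real.exp_log (by linarith)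
    linarith
  set c : ℝ := goodc n η with hcdef
  have hc : 0 < c := goodc_pos hn0 hη0
  set δ : ℝ := c * (1 - exp (-C)) with hδdef
  have hδ0 : 0 < δ := by
    apply mul_pos hc
    have : exp (-C) < 1 := by
      rw [Real.exp_lt_one_iff]
      linarith
    linarith
  obtain ⟨J, hJfin, hJmem, hJnet⟩ := seminorm_net (X := X) (n := n) hc hδ0
  have hSv : ∀ v ∈ J, ∃ Sv : Set (Fin n → X), Sv.Finite ∧
      (∀ x ∈ Sv, ∀ i, ‖x i‖ ≤ 1) ∧
      ∀ y : Fin n → X,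
        (∀ a : Fin n → ℝ, (∑ i, |a i|) ≤ 1 →
          |‖∑ i, a i • y i‖ - ‖∑ i, a i • v i‖| ≤ c * (1 - exp (-C))) →
        ∃ x ∈ Sv, ∃ T : X ≃ₗᵢ[ℝ] X, ∀ i, ‖y i - T (x i)‖ < ε/4 + (exp C - 1) := by
    intro v hv
    obtain ⟨hvnorm, hvlow⟩ := hJmem v hv
    haveI : GoodFam v := ⟨c, hc, hvlow⟩
    have hfr : FinRep ⟨SpanCopy v⟩ X := finRep_spanCopy v
    have htb := h3 C hCpos hCltC' ⟨SpanCopy v⟩ hfr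
    exact cover_of_TBMI v hc hCpos (by positivity) hvnorm hvlow htb
  set SF : (Fin n → X) → Set (Fin n → X) :=
    fun v => if h : v ∈ J then (hSv v h).choose else ∅ with hSF
  have hSFspec : ∀ v (h : v ∈ J), SF v = (hSv v h).choose := by
    intro v h
    rw [hSF]
    simp only [dif_pos h]
  refine ⟨⋃ v ∈ J, SF v, ?_, ?_, ?_⟩
  · apply Set.Finite.biUnion hJfin
    intro v hv
    rw [hSFspec v hv]
    exact (hSv v hv).choose_spec.1
  · intro x hx i
    obtain ⟨v, hv, hxv⟩ := Set.mem_iUnion₂.1 hx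
    rw [hSFspec v hv] at hxv
    exact (hSv v hv).choose_spec.2.1 x hxv i
  · intro y hy
    obtain ⟨y', hy'norm, hy'close, hy'low⟩ := perturb hinf hn0 hη0 hη1 y hy
    obtain ⟨v, hvJ, hclose⟩ := hJnet y' hy'norm (by
      intro a
      exact hy'low a)
    obtain ⟨x, hxSv, T, hT⟩ := (hSv v hvJ).choose_spec.2.2 y' (by
      intro a ha
      exact hclose a ha)
    refine ⟨x, Set.mem_iUnion₂.2 ⟨v, hvJ, by rw [hSFspec v hvJ]; exact hxSv⟩, T, ?_⟩
    intro i
    calc ‖y i - T (x i)‖ ≤ ‖y i - y' i‖ + ‖y' i - T (x i)‖ :=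
          norm_sub_le_norm_sub_add_norm_sub _ _ _
      _ < 2*η + (ε/4 + (exp C - 1)) := by
          apply add_lt_add_of_le_of_lt (hy'close i) (hT i)
      _ ≤ ε/4 + (ε/4 + ε/8) := by
          apply add_le_add h2η
          exact add_le_add (le_refl _) hexpC
      _ < ε := by linarith

end ThreeOneB


/-- Characterizations of ω-categoricity. -/
theorem omegaCategorical_tfae (X : Type*) [NormedAddCommGroup X]
    [NormedSpace ℝ X] [CompleteSpace X] [TopologicalSpace.SeparableSpace X]
    (hinf : ¬ FiniteDimensional ℝ X) :
    List.TFAE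
      [OmegaCategorical X,
       ∀ (E : FinNormedSpace) (C : ℝ), 0 ≤ C → TotallyBoundedModIso E.carrier X C,
       ∃ C' : ℝ, 0 < C' ∧ ∀ C : ℝ, 0 < C → C < C' →
         ∀ E : FinNormedSpace, FinRep E X → TotallyBoundedModIso E.carrier X C] := by
  tfae_have 1 → 2 := fun h E C hC => one_two h E C hC
  tfae_have 2 → 3 := fun h2 => ⟨1, one_pos, fun C hC0 _ E _ => h2 E C hC0.le⟩
  tfae_have 3 → 1 := three_one hinf
  tfae_finish
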